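/- If a strategy σ is incentive compatible — meaning V_e(H, σ) ≥ V_e(H', σ) whenever the consistent sequence H extends H' — then for every expert type h with h₀ ≼ h, there exists a best response H ∈ BR(h₀, h, σ) with final element H₋₁ = h (i.e., σ is fully revealing). -/

import Mathlib

/-- A consistent sequence: a nonempty, strictly increasing chain beginning at `h₀`. -/
def Cons {𝓗 : Type} [Preorder 𝓗] (h₀ : 𝓗) (H : List 𝓗) : Prop :=
  H ≠ [] ∧ H.head? = some h₀ ∧ H.Chain' (· < ·)

/-- Membership in `𝓗(h₀, h)`: a consistent sequence whose final element is `≤ h`. -/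
def Memb {𝓗 : Type} [Preorder 𝓗] (h₀ h : 𝓗) (H : List 𝓗) : Prop :=
  Cons h₀ H ∧ H.getLastD h₀ ≤ h

/-- `H` is a best response for type `h` given expert payoff function `Ve`. -/
def BRp {𝓗 : Type} [Preorder 𝓗] (h₀ : 𝓗) (Ve : List 𝓗 → ℝ) (h : 𝓗) (H : List 𝓗) : Prop :=
  Memb h₀ h H ∧ ∀ H', Memb h₀ h H' → Ve H' ≤ Ve H

/-- an incentive compatible strategy (expert payoff monotone
along extensions) is fully revealing: every type `h` has a best response whose
final element is `h`. -/
theorem IC_implies_fully_revealing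
    {𝓗 : Type} [Fintype 𝓗] [PartialOrder 𝓗] (h₀ : 𝓗) (hmin : ∀ h : 𝓗, h₀ ≤ h)
    (Ve : List 𝓗 → ℝ)
    (hIC : ∀ H H' : List 𝓗, Cons h₀ H → H' ≠ [] → H' <+: H → Ve H' ≤ Ve H) :
    ∀ h : 𝓗, ∃ H : List 𝓗, BRp h₀ Ve h H ∧ H.getLastD h₀ = h := by
  intro h
  set S : Set (List 𝓗) := {H | Memb h₀ h H} with hS
  have hfin : S.Finite := by
    apply (List.finite_length_le 𝓗 (Fintype.card 𝓗)).subset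
    intro H hH
    have hnd : H.Nodup := (List.isChain_iff_pairwise.mp hH.1.2.2).imp ne_of_lt
    exact hnd.length_le_card
  have hne : S.Nonempty := ⟨[h₀], ⟨⟨by simp, by simp, List.isChain_singleton _⟩, by simpa using hmin h⟩⟩
  obtain ⟨H, hHS, hHmax⟩ := Set.exists_max_image S Ve hfin hne
  by_cases hlast : H.getLastD h₀ = h
  · exact ⟨H, ⟨hHS, fun H' hH' => hHmax H' hH'⟩, hlast⟩
  · -- extend H by h
    have hHne : H ≠ [] := hHS.1.1
    have hlt : H.getLastD h₀ < h := lt_of_le_of_ne hHS.2 hlast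
    have hcons : Cons h₀ (H ++ [h]) := by
      refine ⟨by simp, ?_, ?_⟩
      · rw [List.head?_append_of_ne_nil _ hHne]; exact hHS.1.2.1
      · refine List.isChain_append.mpr ?_
        refine ⟨hHS.1.2.2, List.isChain_singleton _, ?_⟩
        intro x hx y hy
        simp at hy; subst hy
        have : H.getLast? = some x := hx
        have : H.getLastD h₀ = x := by
          rw [List.getLastD_eq_getLast?, this]; rfl
        rwa [← this]
    have hmemb : Memb h₀ h (H ++ [h]) := ⟨hcons, by simp [List.getLastD_concat]⟩
    have hge : Ve H ≤ Ve (H ++ [h]) := hIC (H ++ [h]) H hcons hHne ⟨[h], rfl⟩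
    refine ⟨H ++ [h], ⟨hmemb, fun H' hH' => le_trans (hHmax H' hH') hge⟩, by
      simp [List.getLastD_concat]⟩
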